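/- Let p > 1 be a real number with p ≠ 2, and let a, b be real numbers. Then |a+b|^p + |a-b|^p = 2(|a|^p + |b|^p) holds if and only if a = 0 or b = 0. -/
import Mathlib

private lemma rpow_superadd {q x y : ℝ} (hq : 1 < q) (hx : 0 < x) (hy : 0 < y) :
    x ^ q + y ^ q < (x + y) ^ q := by
  have hxy : (0:ℝ) < x + y := by linarith
  have e : ∀ c : ℝ, 0 < c → c ^ q = c * c ^ (q - 1) := by
    intro c hc
    rw [mul_comm, ← Real.rpow_add_one (ne_of_gt hc)]
    norm_num
  have h1 : (x + y) ^ q = x * (x + y) ^ (q - 1) + y * (x + y) ^ (q - 1) := by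
    rw [e _ hxy]; ring
  have hx1 : x ^ q = x * x ^ (q - 1) := e _ hx
  have hy1 : y ^ q = y * y ^ (q - 1) := e _ hy
  have h2 : x ^ (q - 1) < (x + y) ^ (q - 1) :=
    Real.rpow_lt_rpow hx.le (by linarith) (by linarith)
  have h3 : y ^ (q - 1) < (x + y) ^ (q - 1) :=
    Real.rpow_lt_rpow hy.le (by linarith) (by linarith)
  rw [h1, hx1, hy1]
  exact add_lt_add (by nlinarith) (by nlinarith)

private lemma rpow_subadd {q x y : ℝ} (hq0 : 0 < q) (hq : q < 1) (hx : 0 < x) (hy : 0 < y) :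
    (x + y) ^ q < x ^ q + y ^ q := by
  have hxy : (0:ℝ) < x + y := by linarith
  have e : ∀ c : ℝ, 0 < c → c ^ q = c * c ^ (q - 1) := by
    intro c hc
    rw [mul_comm, ← Real.rpow_add_one (ne_of_gt hc)]
    norm_num
  have h1 : (x + y) ^ q = x * (x + y) ^ (q - 1) + y * (x + y) ^ (q - 1) := by
    rw [e _ hxy]; ring
  have hx1 : x ^ q = x * x ^ (q - 1) := e _ hx
  have hy1 : y ^ q = y * y ^ (q - 1) := e _ hy
  have h2 : (x + y) ^ (q - 1) < x ^ (q - 1) :=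
    Real.rpow_lt_rpow_of_neg hx (by linarith) (by linarith)
  have h3 : (x + y) ^ (q - 1) < y ^ (q - 1) :=
    Real.rpow_lt_rpow_of_neg hy (by linarith) (by linarith)
  rw [h1, hx1, hy1]
  exact add_lt_add (by nlinarith) (by nlinarith)

private lemma sq_rpow_half (p c : ℝ) : (c ^ 2) ^ (p / 2) = |c| ^ p := by
  rw [← sq_abs, ← Real.rpow_natCast |c| 2, ← Real.rpow_mul (abs_nonneg c)]
  congr 1
  push_cast
  ring

/-- Equality case in the scalar Clarkson inequalities: for real `p > 1`, `p ≠ 2`,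
`|a+b|^p + |a-b|^p = 2(|a|^p + |b|^p)` iff `a = 0` or `b = 0`. -/
theorem clarkson_scalar_eq (p a b : ℝ) (hp1 : 1 < p) (hp2 : p ≠ 2) :
    |a + b| ^ p + |a - b| ^ p = 2 * (|a| ^ p + |b| ^ p) ↔ a = 0 ∨ b = 0 := by
  have hp0 : p ≠ 0 := by intro h; rw [h] at hp1; norm_num at hp1
  constructor
  · intro heq
    by_contra hcon
    push_neg at hcon
    obtain ⟨ha, hb⟩ := hcon
    have ha2 : (0:ℝ) < a ^ 2 := by positivity
    have hb2 : (0:ℝ) < b ^ 2 := by positivity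
    -- rewrite everything via (c^2)^(p/2)
    have key : ((a + b) ^ 2) ^ (p / 2) + ((a - b) ^ 2) ^ (p / 2)
        = 2 * ((a ^ 2) ^ (p / 2) + (b ^ 2) ^ (p / 2)) := by
      rw [sq_rpow_half, sq_rpow_half, sq_rpow_half, sq_rpow_half]; exact heq
    have hmid : (1/2 : ℝ) • ((a+b)^2) + (1/2 : ℝ) • ((a-b)^2) = a^2 + b^2 := by
      simp only [smul_eq_mul]; ring
    rcases lt_or_gt_of_ne hp2 with hplt | hpgt
    · -- 1 < p < 2 : q = p/2 ∈ (1/2, 1), concave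
      have hq0 : (0:ℝ) < p/2 := by linarith
      have hq1 : p/2 < 1 := by linarith
      have hca := (Real.strictConcaveOn_rpow hq0 hq1).concaveOn
      have h1 := hca.2 (Set.mem_Ici.mpr (by positivity : (0:ℝ) ≤ (a+b)^2))
        (Set.mem_Ici.mpr (by positivity : (0:ℝ) ≤ (a-b)^2))
        (by norm_num : (0:ℝ) ≤ 1/2) (by norm_num : (0:ℝ) ≤ 1/2) (by norm_num)
      rw [hmid] at h1
      have h2 : (a^2 + b^2) ^ (p/2) < (a^2) ^ (p/2) + (b^2) ^ (p/2) :=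
        rpow_subadd hq0 hq1 ha2 hb2
      simp only [smul_eq_mul] at h1
      nlinarith [h1, h2, key]
    · -- p > 2 : q = p/2 > 1, convex
      have hq1 : (1:ℝ) < p/2 := by linarith
      have hcv := (strictConvexOn_rpow hq1).convexOn
      have h1 := hcv.2 (Set.mem_Ici.mpr (by positivity : (0:ℝ) ≤ (a+b)^2))
        (Set.mem_Ici.mpr (by positivity : (0:ℝ) ≤ (a-b)^2))
        (by norm_num : (0:ℝ) ≤ 1/2) (by norm_num : (0:ℝ) ≤ 1/2) (by norm_num)
      rw [hmid] at h1
      have h2 : (a^2) ^ (p/2) + (b^2) ^ (p/2) < (a^2 + b^2) ^ (p/2) :=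
        rpow_superadd hq1 ha2 hb2
      simp only [smul_eq_mul] at h1
      nlinarith [h1, h2, key]
  · rintro (rfl | rfl) <;>
      simp [Real.zero_rpow hp0, abs_neg, abs_sub_comm] <;> ring
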